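/- For every integer n ≥ 1, the feedback vertex numbers of the Sierpiński triangle graphs satisfy the recurrence τ(Ŝ_3^n) = 3·τ(Ŝ_3^{n−1}) − 1. -/

import Mathlib

open SimpleGraph

/-- The Sierpinski graph `S_p^n` on vertex set `P^n`: two distinct vertices are adjacent
iff they can be written as `s i j^(d-1)` and `s j i^(d-1)`. -/
def sierpinski (p n : Nat) : SimpleGraph (Fin n → Fin p) :=
  SimpleGraph.fromRel (fun u v =>
    ∃ t : Fin n, ∃ i j : Fin p, i ≠ j ∧
      (∀ k, k < t → u k = v k) ∧ u t = i ∧ v t = j ∧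
      (∀ k, t < k → u k = j ∧ v k = i))

/-- `X` is a feedback vertex set of `G` if deleting it leaves an acyclic graph. -/
def IsFeedbackVertexSet {V : Type*} (G : SimpleGraph V) (X : Set V) : Prop :=
  (G.induce Xᶜ).IsAcyclic

/-- The feedback vertex number: the minimum cardinality of a feedback vertex set. -/
noncomputable def feedbackNumber {V : Type*} (G : SimpleGraph V) : Nat :=
  sInf {k | ∃ X : Finset V, X.card = k ∧ IsFeedbackVertexSet G ↑X}

/-- The maximum number of vertices of an induced forest of `G`. -/
noncomputable def maxInducedForest {V : Type*} (G : SimpleGraph V) : Nat :=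
  sSup {k | ∃ Y : Finset V, Y.card = k ∧ (G.induce (↑Y : Set V)).IsAcyclic}

/-- The non-clique edges of `S_p^(n+1)`: edges `{s i j^l, s j i^l}` with `l ≥ 1`,
i.e. adjacency witnessed at a position `t` with `t < n`. -/
def nonCliqueRel (p n : Nat) (u v : Fin (n+1) → Fin p) : Prop :=
  ∃ t : Fin (n+1), (t : Nat) < n ∧ ∃ i j : Fin p, i ≠ j ∧
    (∀ k, k < t → u k = v k) ∧ u t = i ∧ v t = j ∧
    (∀ k, t < k → u k = j ∧ v k = i)

/-- The setoid identifying the two endpoints of every non-clique edge of `S_p^(n+1)`. -/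
def triSetoid (p n : Nat) : Setoid (Fin (n+1) → Fin p) :=
  Relation.EqvGen.setoid (nonCliqueRel p n)

/-- The generalized Sierpinski triangle graph: the contraction of all
non-clique edges of `S_p^(n+1)`. -/
def sierpinskiTriangle (p n : Nat) : SimpleGraph (Quotient (triSetoid p n)) where
  Adj x y := x ≠ y ∧ ∃ u v : Fin (n+1) → Fin p,
    Quotient.mk (triSetoid p n) u = x ∧ Quotient.mk (triSetoid p n) v = y ∧
    (sierpinski p (n+1)).Adj u v
  symm := by
    refine ⟨?_⟩
    rintro x y ⟨hxy, u, v, hu, hv, h⟩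
    exact ⟨hxy.symm, v, u, hv, hu, h.symm⟩
  loopless := by
    refine ⟨?_⟩
    rintro x ⟨hxx, -⟩
    exact hxx rfl

section Infra
variable {p n : ℕ}

theorem ncr_symm {u v : Fin (n+1) → Fin p} (h : nonCliqueRel p n u v) :
    nonCliqueRel p n v u := by
  obtain ⟨t, ht, i, j, hij, hlt, hut, hvt, hgt⟩ := h
  exact ⟨t, ht, j, i, hij.symm, fun k hk => (hlt k hk).symm, hvt, hut,
    fun k hk => ⟨(hgt k hk).2, (hgt k hk).1⟩⟩

theorem ncr_unique {u v w : Fin (n+1) → Fin p} (h1 : nonCliqueRel p n u v)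
    (h2 : nonCliqueRel p n u w) : v = w := by
  obtain ⟨t, ht, i, j, hij, hlt, hut, hvt, hgt⟩ := h1
  obtain ⟨t', ht', i', j', hij', hlt', hut', hvt', hgt'⟩ := h2
  have htt : t = t' := by
    by_contra hne
    rcases lt_or_gt_of_ne hne with h | h
    · set k0 : Fin (n+1) := ⟨t'.val+1, by omega⟩ with hk0
      have h1' : t' < k0 := by simp [hk0, Fin.lt_def]
      have h2' : t < k0 := lt_trans h h1'
      have e1 : u k0 = j := (hgt k0 h2').1
      have e2 : u k0 = j' := (hgt' k0 h1').1
      have e3 : u t' = j := (hgt t' h).1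
      exact hij' (by rw [← hut', e3, e1.symm.trans e2])
    · set k0 : Fin (n+1) := ⟨t.val+1, by omega⟩ with hk0
      have h1' : t < k0 := by simp [hk0, Fin.lt_def]
      have h2' : t' < k0 := lt_trans h h1'
      have e1 : u k0 = j := (hgt k0 h1').1
      have e2 : u k0 = j' := (hgt' k0 h2').1
      have e3 : u t = j' := (hgt' t h).1
      exact hij (by rw [← hut, e3, e2.symm.trans e1])
  subst htt
  have hk0lt : t < (⟨t.val+1, by omega⟩ : Fin (n+1)) := by simp [Fin.lt_def]
  have hjj : j = j' := by
    rw [← (hgt _ hk0lt).1, (hgt' _ hk0lt).1]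
  have hii : i = i' := by rw [← hut, hut']
  funext k
  rcases lt_trichotomy k t with hk | hk | hk
  · rw [← hlt k hk, hlt' k hk]
  · subst hk; rw [hvt, hvt', hjj]
  · rw [(hgt k hk).2, (hgt' k hk).2, hii]

theorem eqvGen_iff {u v : Fin (n+1) → Fin p} :
    Relation.EqvGen (nonCliqueRel p n) u v ↔ u = v ∨ nonCliqueRel p n u v := by
  constructor
  · intro h
    induction h with
    | rel x y h => exact Or.inr h
    | refl x => exact Or.inl rfl
    | symm x y h ih =>
        rcases ih with rfl | h'
        · exact Or.inl rfl
        · exact Or.inr (ncr_symm h')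
    | trans x y z h1 h2 ih1 ih2 =>
        rcases ih1 with rfl | h1'
        · exact ih2
        · rcases ih2 with rfl | h2'
          · exact Or.inr h1'
          · exact Or.inl (ncr_unique (ncr_symm h1') h2')
  · rintro (rfl | h)
    · exact Relation.EqvGen.refl u
    · exact Relation.EqvGen.rel _ _ h

theorem mk_eq_mk {u v : Fin (n+1) → Fin p} :
    Quotient.mk (triSetoid p n) u = Quotient.mk (triSetoid p n) v ↔
      (u = v ∨ nonCliqueRel p n u v) :=
  ⟨fun h => eqvGen_iff.1 (Quotient.exact h),
   fun h => Quotient.sound (eqvGen_iff.2 h)⟩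

end Infra
section Infra2
variable {p n m : ℕ}

theorem ncr_const_right {u : Fin (n+1) → Fin p} {c : Fin p} :
    ¬ nonCliqueRel p n u (fun _ => c) := by
  rintro ⟨t, ht, i, j, hij, hlt, hut, hvt, hgt⟩
  have h2 := (hgt ⟨t.val+1, by omega⟩ (by simp [Fin.lt_def])).2
  exact hij (h2.symm.trans hvt)

theorem ncr_const_left {u : Fin (n+1) → Fin p} {c : Fin p} :
    ¬ nonCliqueRel p n (fun _ => c) u :=
  fun h => ncr_const_right (ncr_symm h)

abbrev Vtx (m : ℕ) := Quotient (triSetoid 3 m)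

abbrev mkV {m : ℕ} (u : Fin (m+1) → Fin 3) : Vtx m := Quotient.mk (triSetoid 3 m) u

def corner (m : ℕ) (c : Fin 3) : Vtx m := mkV (fun _ => c)

abbrev SG (m : ℕ) := sierpinskiTriangle 3 m

theorem eq_corner_iff {u : Fin (m+1) → Fin 3} {c : Fin 3} :
    mkV u = corner m c ↔ u = fun _ => c := by
  rw [corner, mk_eq_mk]
  constructor
  · rintro (h | h)
    · exact h
    · exact absurd h ncr_const_right
  · exact Or.inl

theorem corner_injective {c c' : Fin 3} (h : corner m c = corner m c') : c = c' := by
  rw [corner, eq_corner_iff] at h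
  exact congrFun h 0

theorem snoc_ne_snoc {s : Fin m → Fin 3} {i j : Fin 3} (hij : i ≠ j) :
    mkV (Fin.snoc s i) ≠ mkV (Fin.snoc s j) := by
  intro hmem
  rcases mk_eq_mk.1 hmem with h | h
  · exact hij (by
      have := congrFun h (Fin.last m)
      simpa [Fin.snoc_last] using this)
  · obtain ⟨t, ht, a, b, hab, hlt, hut, hvt, hgt⟩ := h
    have hcast : t = Fin.castSucc ⟨t.val, ht⟩ := by ext; rfl
    rw [hcast, Fin.snoc_castSucc] at hut hvt
    exact hab (hut.symm.trans hvt)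

theorem adj_iff {x y : Vtx m} :
    (SG m).Adj x y ↔ ∃ (s : Fin m → Fin 3) (i j : Fin 3), i ≠ j ∧
      x = mkV (Fin.snoc s i) ∧ y = mkV (Fin.snoc s j) := by
  constructor
  · rintro ⟨hne, u, v, hu, hv, hadj⟩
    simp only [sierpinski, SimpleGraph.fromRel_adj] at hadj
    obtain ⟨huv, hrel⟩ := hadj
    subst hu
    subst hv
    have main : ∀ u' v' : Fin (m+1) → Fin 3, mkV u' ≠ mkV v' →
        (∃ t : Fin (m+1), ∃ i j : Fin 3, i ≠ j ∧
          (∀ k, k < t → u' k = v' k) ∧ u' t = i ∧ v' t = j ∧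
          (∀ k, t < k → u' k = j ∧ v' k = i)) →
        ∃ (s : Fin m → Fin 3) (i j : Fin 3), i ≠ j ∧
          u' = Fin.snoc s i ∧ v' = Fin.snoc s j := by
      intro u' v' hne' hrel'
      obtain ⟨t, i, j, hij, hlt, hut, hvt, hgt⟩ := hrel'
      by_cases htm : (t : ℕ) < m
      · exact absurd (Quotient.sound (eqvGen_iff.2 (Or.inr
          ⟨t, htm, i, j, hij, hlt, hut, hvt, hgt⟩))) hne'
      · have htl : t = Fin.last m := by
          ext; have := t.isLt; simp only [Fin.val_last]; omega
        subst htl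
        refine ⟨Fin.init u', i, j, hij, ?_, ?_⟩
        · rw [← hut]; exact (Fin.snoc_init_self u').symm
        · have hinit : Fin.init v' = Fin.init u' := by
            funext k
            exact (hlt (Fin.castSucc k) (Fin.castSucc_lt_last k)).symm
          rw [← hvt, ← hinit]; exact (Fin.snoc_init_self v').symm
    rcases hrel with h | h
    · obtain ⟨s, i, j, hij, h1, h2⟩ := main u v hne h
      exact ⟨s, i, j, hij, by rw [h1], by rw [h2]⟩
    · obtain ⟨s, i, j, hij, h1, h2⟩ := main v u hne.symm h
      exact ⟨s, j, i, hij.symm, by rw [h2], by rw [h1]⟩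
  · rintro ⟨s, i, j, hij, rfl, rfl⟩
    refine ⟨snoc_ne_snoc hij, Fin.snoc s i, Fin.snoc s j, rfl, rfl, ?_⟩
    simp only [sierpinski, SimpleGraph.fromRel_adj]
    constructor
    · intro h
      exact hij (by
        have := congrFun h (Fin.last m)
        simpa [Fin.snoc_last] using this)
    · refine Or.inl ⟨Fin.last m, i, j, hij, ?_, ?_, ?_, ?_⟩
      · intro k hk
        have hk' : k ≠ Fin.last m := ne_of_lt hk
        rw [← Fin.castSucc_castPred k hk', Fin.snoc_castSucc, Fin.snoc_castSucc]
      · simp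
      · simp
      · intro k hk
        exact absurd (Fin.le_last k) (not_le.2 hk)

end Infra2
section Acyclic
open SimpleGraph.Walk

theorem rank_no_cycle {V : Type*} {G : SimpleGraph V} {ρ : V → ℕ}
    (h1 : ∀ a b, G.Adj a b → ρ a ≠ ρ b)
    (h2 : ∀ a b c, G.Adj a b → G.Adj a c → ρ b < ρ a → ρ c < ρ a → b = c)
    {u : V} (d : G.Walk u u) (hd : d.IsCycle)
    (hsup : ∀ z, z ∈ d.support → ρ z ≤ ρ u) : False := by
  cases d with
  | nil => exact SimpleGraph.Walk.IsCycle.not_of_nil hd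
  | cons h p =>
    rename_i y
    have hlen := hd.three_le_length
    rw [SimpleGraph.Walk.cons_isCycle_iff] at hd
    obtain ⟨hp, he⟩ := hd
    obtain ⟨x, q, h', heq⟩ := SimpleGraph.Walk.exists_cons_eq_concat h p
    have hy : y ∈ (SimpleGraph.Walk.cons h p).support := by
      rw [SimpleGraph.Walk.support_cons]
      exact List.mem_cons_of_mem _ p.start_mem_support
    have hx : x ∈ (SimpleGraph.Walk.cons h p).support := by
      rw [heq, SimpleGraph.Walk.concat_eq_append, mem_support_append_iff]
      exact Or.inl q.end_mem_support
    have hρy : ρ y < ρ u := lt_of_le_of_ne (hsup y hy) (fun hh => h1 u y h hh.symm)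
    have hρx : ρ x < ρ u :=
      lt_of_le_of_ne (hsup x hx) (fun hh => h1 u x h'.symm hh.symm)
    have hyx : y = x := h2 u y x h h'.symm hρy hρx
    cases q with
    | nil =>
      have h5 : (SimpleGraph.Walk.cons h p).length = 1 := by rw [heq]; simp
      omega
    | cons h'' q' =>
      have hedg := congrArg SimpleGraph.Walk.edges heq
      rw [SimpleGraph.Walk.concat_cons, SimpleGraph.Walk.edges_cons,
        SimpleGraph.Walk.edges_cons, SimpleGraph.Walk.edges_concat] at hedg
      have htail : p.edges = q'.edges ++ [s(x, u)] := by
        have := congrArg List.tail hedg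
        simpa using this
      subst hyx
      apply he
      rw [htail]
      simp [Sym2.eq_swap]

theorem rank_isAcyclic {V : Type*} {G : SimpleGraph V} (ρ : V → ℕ)
    (h1 : ∀ a b, G.Adj a b → ρ a ≠ ρ b)
    (h2 : ∀ a b c, G.Adj a b → G.Adj a c → ρ b < ρ a → ρ c < ρ a → b = c) :
    G.IsAcyclic := by
  classical
  intro v c hc
  have hne : c.support.toFinset.Nonempty := by
    rw [List.toFinset_nonempty_iff]
    exact c.support_ne_nil
  obtain ⟨u, hu, hmax⟩ := Finset.exists_max_image c.support.toFinset ρ hne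
  rw [List.mem_toFinset] at hu
  refine rank_no_cycle h1 h2 (c.rotate u hu) (hc.rotate hu) ?_
  intro z hz
  apply hmax
  rw [List.mem_toFinset]
  have hrot := SimpleGraph.Walk.support_rotate c u hu
  have : z ∈ (c.rotate u hu).support.tail ∨ z = u := by
    rcases List.mem_cons.1 (by rwa [← SimpleGraph.Walk.support_eq_cons] ) with h | h
    · exact Or.inr h
    · exact Or.inl h
  rcases this with h | rfl
  · exact List.tail_subset _ (hrot.mem_iff.1 h)
  · exact hu
end Acyclic
section Lower

theorem triangle_not_acyclic {V : Type*} {G : SimpleGraph V} {a b c : V}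
    (hab : G.Adj a b) (hbc : G.Adj b c) (hca : G.Adj c a) : ¬ G.IsAcyclic := by
  intro hac
  have hnab : a ≠ b := hab.ne
  have hnbc : b ≠ c := hbc.ne
  have hnca : c ≠ a := hca.ne
  have hcyc : (SimpleGraph.Walk.cons hab (SimpleGraph.Walk.cons hbc
      (SimpleGraph.Walk.cons hca SimpleGraph.Walk.nil))).IsCycle := by
    rw [SimpleGraph.Walk.cons_isCycle_iff]
    constructor
    · rw [SimpleGraph.Walk.isPath_def]
      simp only [SimpleGraph.Walk.support_cons, SimpleGraph.Walk.support_nil]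
      simp [hnbc, hnca, Ne.symm hnca, Ne.symm hnab]
    · simp only [SimpleGraph.Walk.edges_cons, SimpleGraph.Walk.edges_nil]
      simp only [List.mem_cons, List.not_mem_nil, or_false]
      rintro (h | h)
      · rw [Sym2.eq_iff] at h
        rcases h with ⟨h1, h2⟩ | ⟨h1, h2⟩
        · exact hnab h1
        · exact hnca h1.symm
      · rw [Sym2.eq_iff] at h
        rcases h with ⟨h1, h2⟩ | ⟨h1, h2⟩
        · exact hnca h1.symm
        · exact hnbc h2
  exact hac _ hcyc

noncomputable instance vtxFintype (m : ℕ) : Fintype (Vtx m) := by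
  classical
  exact Quotient.fintype _

theorem fvs_lower_bound {m : ℕ} (X : Finset (Vtx m))
    (hX : IsFeedbackVertexSet (SG m) ↑X) : (3^m + 1)/2 ≤ X.card := by
  classical
  have hhit : ∀ s : Fin m → Fin 3, ∃ i : Fin 3, mkV (Fin.snoc s i) ∈ X := by
    intro s
    by_contra hcon
    push_neg at hcon
    have hmem : ∀ i : Fin 3, (mkV (Fin.snoc s i)) ∈ (↑X : Set (Vtx m))ᶜ := fun i => hcon i
    have adj01 : (SG m).Adj (mkV (Fin.snoc s 0)) (mkV (Fin.snoc s 1)) :=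
      adj_iff.2 ⟨s, 0, 1, by decide, rfl, rfl⟩
    have adj12 : (SG m).Adj (mkV (Fin.snoc s 1)) (mkV (Fin.snoc s 2)) :=
      adj_iff.2 ⟨s, 1, 2, by decide, rfl, rfl⟩
    have adj20 : (SG m).Adj (mkV (Fin.snoc s 2)) (mkV (Fin.snoc s 0)) :=
      adj_iff.2 ⟨s, 2, 0, by decide, rfl, rfl⟩
    exact triangle_not_acyclic (G := (SG m).induce (↑X : Set (Vtx m))ᶜ)
      (a := ⟨_, hmem 0⟩) (b := ⟨_, hmem 1⟩) (c := ⟨_, hmem 2⟩)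
      (SimpleGraph.comap_adj.2 adj01) (SimpleGraph.comap_adj.2 adj12)
      (SimpleGraph.comap_adj.2 adj20) hX
  choose pick hpick using hhit
  set F : (Fin m → Fin 3) → Vtx m := fun s => mkV (Fin.snoc s (pick s)) with hF
  have himg : Finset.univ.image F ⊆ X := by
    intro a ha
    obtain ⟨s, _, rfl⟩ := Finset.mem_image.1 ha
    exact hpick s
  have hfib : ∀ a ∈ Finset.univ.image F,
      (Finset.univ.filter fun s => F s = a).card ≤ 2 := by
    intro a _
    obtain ⟨u₀, hu₀⟩ := Quot.exists_rep a
    have hu₀' : mkV u₀ = a := hu₀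
    set w₀ : Fin (m+1) → Fin 3 :=
      if h : ∃ w, nonCliqueRel 3 m u₀ w then h.choose else u₀ with hw₀
    have hsub : (Finset.univ.filter fun s => F s = a) ⊆
        {Fin.init u₀, Fin.init w₀} := by
      intro s hs
      have hFs : F s = a := (Finset.mem_filter.1 hs).2
      have heq : mkV (Fin.snoc s (pick s)) = mkV u₀ := by rw [← hu₀'] at hFs; exact hFs
      rcases mk_eq_mk.1 heq with h | h
      · have : s = Fin.init u₀ := by rw [← h]; simp
        simp [this]
      · have hex : ∃ w, nonCliqueRel 3 m u₀ w := ⟨_, ncr_symm h⟩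
        have : Fin.snoc s (pick s) = w₀ := by
          rw [hw₀, dif_pos hex]
          exact ncr_unique (ncr_symm h) hex.choose_spec
        have hs' : s = Fin.init w₀ := by rw [← this]; simp
        simp [hs']
    calc (Finset.univ.filter fun s => F s = a).card
        ≤ ({Fin.init u₀, Fin.init w₀} : Finset (Fin m → Fin 3)).card :=
          Finset.card_le_card hsub
      _ ≤ 2 := Finset.card_insert_le _ _ |>.trans (by simp)
  have hcount := Finset.card_le_mul_card_image (f := F)
    (Finset.univ : Finset (Fin m → Fin 3)) 2 hfib
  rw [Finset.card_univ] at hcount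
  have hcard : Fintype.card (Fin m → Fin 3) = 3^m := by
    rw [Fintype.card_fun]; simp
  rw [hcard] at hcount
  have himgcard : (Finset.univ.image F).card ≤ X.card := Finset.card_le_card himg
  have hodd : Odd (3^m) := Odd.pow (by decide)
  obtain ⟨k, hk⟩ := hodd
  omega
end Lower
section Emb
variable {m : ℕ}

theorem ncr_cons {i : Fin 3} {u v : Fin (m+1) → Fin 3} (h : nonCliqueRel 3 m u v) :
    nonCliqueRel 3 (m+1) (Fin.cons i u) (Fin.cons i v) := by
  obtain ⟨t, ht, a, b, hab, hlt, hut, hvt, hgt⟩ := h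
  refine ⟨t.succ, by simp [Fin.val_succ]; omega, a, b, hab, ?_, ?_, ?_, ?_⟩
  · intro k hk
    cases k using Fin.cases with
    | zero => simp
    | succ k' =>
      rw [Fin.cons_succ, Fin.cons_succ]
      exact hlt k' (by rwa [Fin.succ_lt_succ_iff] at hk)
  · rw [Fin.cons_succ]; exact hut
  · rw [Fin.cons_succ]; exact hvt
  · intro k hk
    cases k using Fin.cases with
    | zero => exact absurd hk (by simp [Fin.lt_iff_val_lt_val])
    | succ k' =>
      rw [Fin.cons_succ, Fin.cons_succ]
      exact hgt k' (by rwa [Fin.succ_lt_succ_iff] at hk)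

def emb (i : Fin 3) : Vtx m → Vtx (m+1) :=
  Quotient.map (fun u => Fin.cons i u) (by
    intro u v huv
    have h := eqvGen_iff.1 huv
    rcases h with rfl | h
    · exact Relation.EqvGen.refl _
    · exact Relation.EqvGen.rel _ _ (ncr_cons h))

theorem emb_mk {i : Fin 3} {u : Fin (m+1) → Fin 3} :
    emb i (mkV u) = mkV (Fin.cons i u) := rfl

theorem emb_inj {i : Fin 3} {x y : Vtx m} (h : emb i x = emb i y) : x = y := by
  obtain ⟨u, rfl⟩ := Quot.exists_rep x
  obtain ⟨v, rfl⟩ := Quot.exists_rep y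
  have h' : mkV (Fin.cons i u) = mkV (Fin.cons i v) := h
  rcases mk_eq_mk.1 h' with h'' | h''
  · have : u = v := by
      funext k
      have := congrFun h'' k.succ
      rwa [Fin.cons_succ, Fin.cons_succ] at this
    rw [this]
  · obtain ⟨t, ht, a, b, hab, hlt, hut, hvt, hgt⟩ := h''
    cases t using Fin.cases with
    | zero =>
      rw [Fin.cons_zero] at hut hvt
      exact absurd (hut.symm.trans hvt) hab
    | succ t' =>
      apply Quotient.sound
      apply eqvGen_iff.2
      refine Or.inr ⟨t', by have := ht; simp [Fin.val_succ] at this ⊢; omega,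
        a, b, hab, ?_, ?_, ?_, ?_⟩
      · intro k hk
        have := hlt k.succ (by rwa [Fin.succ_lt_succ_iff])
        rwa [Fin.cons_succ, Fin.cons_succ] at this
      · have := hut; rwa [Fin.cons_succ] at this
      · have := hvt; rwa [Fin.cons_succ] at this
      · intro k hk
        have := hgt k.succ (by rwa [Fin.succ_lt_succ_iff])
        rwa [Fin.cons_succ, Fin.cons_succ] at this

theorem emb_cross {i j : Fin 3} {x y : Vtx m} (hij : i ≠ j)
    (h : emb i x = emb j y) : x = corner m j ∧ y = corner m i := by
  obtain ⟨u, rfl⟩ := Quot.exists_rep x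
  obtain ⟨v, rfl⟩ := Quot.exists_rep y
  have h' : mkV (Fin.cons i u) = mkV (Fin.cons j v) := h
  rcases mk_eq_mk.1 h' with h'' | h''
  · have := congrFun h'' 0
    rw [Fin.cons_zero, Fin.cons_zero] at this
    exact absurd this hij
  · obtain ⟨t, ht, a, b, hab, hlt, hut, hvt, hgt⟩ := h''
    cases t using Fin.cases with
    | succ t' =>
      have := hlt 0 (by simp [Fin.lt_iff_val_lt_val])
      rw [Fin.cons_zero, Fin.cons_zero] at this
      exact absurd this hij
    | zero =>
      rw [Fin.cons_zero] at hut hvt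
      constructor
      · show mkV u = corner m j
        rw [eq_corner_iff]
        funext k
        have := (hgt k.succ (by simp [Fin.lt_iff_val_lt_val])).1
        rw [Fin.cons_succ] at this
        rw [this, ← hvt]
      · show mkV v = corner m i
        rw [eq_corner_iff]
        funext k
        have := (hgt k.succ (by simp [Fin.lt_iff_val_lt_val])).2
        rw [Fin.cons_succ] at this
        rw [this, ← hut]

theorem emb_cover (x : Vtx (m+1)) : ∃ (i : Fin 3) (y : Vtx m), emb i y = x := by
  obtain ⟨u, rfl⟩ := Quot.exists_rep x
  refine ⟨u 0, mkV (Fin.tail u), ?_⟩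
  rw [emb_mk]
  exact congrArg _ (Fin.cons_self_tail u)

theorem emb_corner_self (i : Fin 3) : emb i (corner m i) = corner (m+1) i := by
  rw [corner, emb_mk, corner]
  congr 1
  funext k
  cases k using Fin.cases with
  | zero => simp
  | succ k' => simp [Fin.cons_succ]

theorem emb_corner_glue {i c : Fin 3} (hic : i ≠ c) :
    emb i (corner m c) = emb c (corner m i) := by
  rw [corner, emb_mk, corner, emb_mk]
  apply Quotient.sound
  apply eqvGen_iff.2
  refine Or.inr ⟨0, by simp, i, c, hic, ?_, ?_, ?_, ?_⟩
  · intro k hk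
    exact absurd hk (by simp [Fin.lt_iff_val_lt_val])
  · rw [Fin.cons_zero]
  · rw [Fin.cons_zero]
  · intro k hk
    cases k using Fin.cases with
    | zero => exact absurd hk (by simp [Fin.lt_iff_val_lt_val])
    | succ k' => rw [Fin.cons_succ, Fin.cons_succ]; exact ⟨rfl, rfl⟩

theorem emb_adj {i : Fin 3} {x y : Vtx m} (h : (SG m).Adj x y) :
    (SG (m+1)).Adj (emb i x) (emb i y) := by
  obtain ⟨s, a, b, hab, rfl, rfl⟩ := adj_iff.1 h
  rw [emb_mk, emb_mk]
  exact adj_iff.2 ⟨Fin.cons i s, a, b, hab,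
    congrArg _ (Fin.cons_snoc_eq_snoc_cons _ _ _),
    congrArg _ (Fin.cons_snoc_eq_snoc_cons _ _ _)⟩

theorem adj_decompose {x' y' : Vtx (m+1)} (h : (SG (m+1)).Adj x' y') :
    ∃ (i : Fin 3) (x y : Vtx m), x' = emb i x ∧ y' = emb i y ∧ (SG m).Adj x y := by
  obtain ⟨s, a, b, hab, rfl, rfl⟩ := adj_iff.1 h
  refine ⟨s 0, mkV (Fin.snoc (Fin.tail s) a), mkV (Fin.snoc (Fin.tail s) b), ?_, ?_, ?_⟩
  · rw [emb_mk, Fin.cons_snoc_eq_snoc_cons, Fin.cons_self_tail]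
  · rw [emb_mk, Fin.cons_snoc_eq_snoc_cons, Fin.cons_self_tail]
  · exact adj_iff.2 ⟨Fin.tail s, a, b, hab, rfl, rfl⟩

theorem emb_adj_iff {i : Fin 3} {x y : Vtx m} :
    (SG (m+1)).Adj (emb i x) (emb i y) ↔ (SG m).Adj x y := by
  refine ⟨fun h => ?_, emb_adj⟩
  obtain ⟨j, x₂, y₂, hx, hy, hadj⟩ := adj_decompose h
  by_cases hji : j = i
  · subst hji
    rw [emb_inj hx, emb_inj hy]
    exact hadj
  · have h1 := emb_cross (fun hh : i = j => hji hh.symm) hx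
    have h2 := emb_cross (fun hh : i = j => hji hh.symm) hy
    exact absurd (congrArg (emb i) (h1.1.trans h2.1.symm)) h.ne

theorem emb_eq_corner {i d : Fin 3} {x : Vtx m}
    (h : emb i x = corner (m+1) d) : i = d ∧ x = corner m d := by
  rw [← emb_corner_self] at h
  by_cases hid : i = d
  · subst hid
    exact ⟨rfl, emb_inj h⟩
  · have := emb_cross hid h
    exact absurd (corner_injective this.2.symm) hid

end Emb
section Invariant

def fnum (m : ℕ) : ℕ := (3^m + 1)/2

def Invar (m : ℕ) (a b : Fin 3) : Prop :=
  ∃ (X : Finset (Vtx m)) (ρ : Vtx m → ℕ),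
    X.card = fnum m ∧
    (∀ c : Fin 3, corner m c ∈ X ↔ c = a) ∧
    (∀ x y, (SG m).Adj x y → x ∉ X → y ∉ X → ρ x ≠ ρ y) ∧
    (∀ x y z, (SG m).Adj x y → (SG m).Adj x z → x ∉ X → y ∉ X → z ∉ X →
      ρ y < ρ x → ρ z < ρ x → y = z) ∧
    (∀ y, (SG m).Adj (corner m b) y → y ∉ X → ρ (corner m b) < ρ y)

theorem vtx0_eq_corner (x : Vtx 0) : ∃ c, x = corner 0 c := by
  obtain ⟨u, rfl⟩ := Quot.exists_rep x
  refine ⟨u 0, ?_⟩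
  show mkV u = corner 0 (u 0)
  rw [eq_corner_iff]
  funext k
  have hk : k = 0 := by ext; omega
  rw [hk]

theorem fin3_aux1 : ∀ a b cx cy : Fin 3, a ≠ b → cx ≠ a → cy ≠ a → cx ≠ cy → cx ≠ b → cy = b := by
  decide

theorem inv_base {a b : Fin 3} (hab : a ≠ b) : Invar 0 a b := by
  classical
  set ρ0 : Vtx 0 → ℕ := fun x => if x = corner 0 b then 0 else 1 with hρ0
  have hvb : ρ0 (corner 0 b) = 0 := by simp [hρ0]
  have hv1 : ∀ x, x ≠ corner 0 b → ρ0 x = 1 := by intro x hx; simp [hρ0, hx]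
  have hle : ∀ x, ρ0 x ≤ 1 := by
    intro x
    by_cases h : x = corner 0 b
    · simp [hρ0, h]
    · simp [hρ0, h]
  refine ⟨{corner 0 a}, ρ0, by simp [fnum], ?_, ?_, ?_, ?_⟩
  · intro c
    simp only [Finset.mem_singleton]
    exact ⟨corner_injective, by rintro rfl; rfl⟩
  · intro x y hadj hx hy
    obtain ⟨cx, rfl⟩ := vtx0_eq_corner x
    obtain ⟨cy, rfl⟩ := vtx0_eq_corner y
    simp only [Finset.mem_singleton] at hx hy
    have hxa : cx ≠ a := fun h => hx (by rw [h])
    have hya : cy ≠ a := fun h => hy (by rw [h])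
    have hxy : cx ≠ cy := fun h => hadj.ne (by rw [h])
    by_cases hxb : cx = b
    · have hyb : cy ≠ b := fun h => hxy (hxb.trans h.symm)
      rw [hxb, hvb, hv1 _ (fun h => hyb (corner_injective h))]
      omega
    · have hyb : cy = b := fin3_aux1 a b cx cy hab hxa hya hxy hxb
      rw [hyb, hvb, hv1 _ (fun h => hxb (corner_injective h))]
      omega
  · intro x y z hxy hxz hx hy hz hρy hρz
    have hy' : y = corner 0 b := by
      by_contra h
      rw [hv1 y h] at hρy
      have := hle x; omega
    have hz' : z = corner 0 b := by
      by_contra h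
      rw [hv1 z h] at hρz
      have := hle x; omega
    rw [hy', hz']
  · intro y hadj hy
    have hne : y ≠ corner 0 b := fun h => hadj.ne h.symm
    rw [hvb, hv1 y hne]
    omega

end Invariant
section Step

theorem fin3_exists : ∀ a b : Fin 3, a ≠ b → ∃ c, c ≠ a ∧ c ≠ b := by decide

theorem fin3_cover : ∀ a b c d : Fin 3, a ≠ b → c ≠ a → c ≠ b →
    (d = a ∨ d = b ∨ d = c) := by decide

theorem inv_step {m : ℕ} (IH : ∀ a b : Fin 3, a ≠ b → Invar m a b)
    {a b : Fin 3} (hab : a ≠ b) : Invar (m+1) a b := by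
  classical
  obtain ⟨c, hca, hcb⟩ := fin3_exists a b hab
  obtain ⟨XA, ρA, cardA, cornA, neA, uniqA, rootA⟩ := IH a b hab
  obtain ⟨XB, ρB, cardB, cornB, neB, uniqB, rootB⟩ := IH c b hcb
  obtain ⟨XC, ρC, cardC, cornC, neC, uniqC, rootC⟩ := IH b a (Ne.symm hab)
  set M : ℕ := (Finset.univ.sup ρB) + 1 with hM
  set N : ℕ := M + (Finset.univ.sup ρA) + 1 with hN
  have hltM : ∀ y, ρB y < M := fun y =>
    Nat.lt_succ_of_le (Finset.le_sup (Finset.mem_univ y))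
  have hltN : ∀ y, ρA y + M < N := by
    intro y
    have := Finset.le_sup (f := ρA) (Finset.mem_univ y)
    omega
  set X : Finset (Vtx (m+1)) :=
    XA.image (emb a) ∪ XB.image (emb b) ∪ XC.image (emb c) with hX
  set ρ : Vtx (m+1) → ℕ := fun x =>
    if h : ∃ y, emb b y = x then ρB h.choose
    else if h : ∃ y, emb a y = x then ρA h.choose + M
    else if h : ∃ y, emb c y = x then ρC h.choose + N
    else 0 with hρ
  -- evaluation lemmas
  have evB : ∀ y, ρ (emb b y) = ρB y := by
    intro y
    have hex : ∃ z, emb b z = emb b y := ⟨y, rfl⟩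
    simp only [hρ]
    rw [dif_pos hex]
    exact congrArg ρB (emb_inj hex.choose_spec)
  have evA : ∀ y, y ≠ corner m b → ρ (emb a y) = ρA y + M := by
    intro y hy
    have hnb : ¬ ∃ z, emb b z = emb a y := by
      rintro ⟨z, hz⟩
      exact hy (emb_cross (Ne.symm hab) hz).2
    have hex : ∃ z, emb a z = emb a y := ⟨y, rfl⟩
    simp only [hρ]
    rw [dif_neg hnb, dif_pos hex]
    exact congrArg (· + M) (congrArg ρA (emb_inj hex.choose_spec))
  have evAB : ρ (emb a (corner m b)) = ρB (corner m a) := by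
    rw [emb_corner_glue hab, evB]
  have evC : ∀ y, y ≠ corner m b → y ≠ corner m a → ρ (emb c y) = ρC y + N := by
    intro y hyb hya
    have hnb : ¬ ∃ z, emb b z = emb c y := by
      rintro ⟨z, hz⟩
      exact hyb (emb_cross (Ne.symm hcb) hz).2
    have hna : ¬ ∃ z, emb a z = emb c y := by
      rintro ⟨z, hz⟩
      exact hya (emb_cross (Ne.symm hca) hz).2
    have hex : ∃ z, emb c z = emb c y := ⟨y, rfl⟩
    simp only [hρ]
    rw [dif_neg hnb, dif_neg hna, dif_pos hex]
    exact congrArg (· + N) (congrArg ρC (emb_inj hex.choose_spec))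
  have hcbne : (corner m c : Vtx m) ≠ corner m b :=
    fun h => hcb (corner_injective h)
  have evCA : ρ (emb c (corner m a)) = ρA (corner m c) + M := by
    rw [emb_corner_glue hca, evA (corner m c) hcbne]
  -- membership lemmas
  have memX : ∀ x', x' ∈ X ↔ (∃ z ∈ XA, emb a z = x') ∨ (∃ z ∈ XB, emb b z = x') ∨
      (∃ z ∈ XC, emb c z = x') := by
    intro x'
    simp only [hX, Finset.mem_union, Finset.mem_image, or_assoc]
  have hXa : ∀ y, emb a y ∈ X ↔ y ∈ XA := by
    intro y
    rw [memX]
    constructor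
    · rintro (⟨z, hz, hze⟩ | ⟨z, hz, hze⟩ | ⟨z, hz, hze⟩)
      · rwa [emb_inj hze] at hz
      · have h := emb_cross (Ne.symm hab) hze
        rw [h.1] at hz
        exact absurd ((cornB a).1 hz) (Ne.symm hca)
      · have h := emb_cross hca hze
        rw [h.1] at hz
        exact absurd ((cornC a).1 hz) hab
    · intro hy
      exact Or.inl ⟨y, hy, rfl⟩
  have hXb : ∀ y, emb b y ∈ X ↔ y ∈ XB := by
    intro y
    rw [memX]
    constructor
    · rintro (⟨z, hz, hze⟩ | ⟨z, hz, hze⟩ | ⟨z, hz, hze⟩)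
      · have h := emb_cross hab hze
        rw [h.1] at hz
        exact absurd ((cornA b).1 hz) (Ne.symm hab)
      · rwa [emb_inj hze] at hz
      · have h := emb_cross hcb hze
        rw [h.2]
        exact (cornB c).2 rfl
    · intro hy
      exact Or.inr (Or.inl ⟨y, hy, rfl⟩)
  have hXc : ∀ y, emb c y ∈ X ↔ y ∈ XC := by
    intro y
    rw [memX]
    constructor
    · rintro (⟨z, hz, hze⟩ | ⟨z, hz, hze⟩ | ⟨z, hz, hze⟩)
      · have h := emb_cross (Ne.symm hca) hze
        rw [h.1] at hz
        exact absurd ((cornA c).1 hz) hca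
      · have h := emb_cross (Ne.symm hcb) hze
        rw [h.2]
        exact (cornC b).2 rfl
      · rwa [emb_inj hze] at hz
    · intro hy
      exact Or.inr (Or.inr ⟨y, hy, rfl⟩)
  -- cardinality
  have einj : ∀ i : Fin 3, Function.Injective (emb (m := m) i) :=
    fun i x y h => emb_inj h
  have hdisj : Disjoint (XA.image (emb a)) (XB.image (emb b) ∪ XC.image (emb c)) := by
    rw [Finset.disjoint_left]
    intro x hxA hxBC
    obtain ⟨z, hz, rfl⟩ := Finset.mem_image.1 hxA
    rcases Finset.mem_union.1 hxBC with h | h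
    · obtain ⟨w, hw, hwe⟩ := Finset.mem_image.1 h
      have h2 := emb_cross (Ne.symm hab) hwe
      rw [h2.2] at hz
      exact absurd ((cornA b).1 hz) (Ne.symm hab)
    · obtain ⟨w, hw, hwe⟩ := Finset.mem_image.1 h
      have h2 := emb_cross hca hwe
      rw [h2.2] at hz
      exact absurd ((cornA c).1 hz) hca
  have hBC : XB.image (emb b) ∩ XC.image (emb c) = {emb b (corner m c)} := by
    ext x
    simp only [Finset.mem_inter, Finset.mem_image, Finset.mem_singleton]
    constructor
    · rintro ⟨⟨z, hz, rfl⟩, ⟨w, hw, hwe⟩⟩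
      have h2 := emb_cross hcb hwe
      rw [h2.2]
    · rintro rfl
      exact ⟨⟨corner m c, (cornB c).2 rfl, rfl⟩,
        ⟨corner m b, (cornC b).2 rfl, emb_corner_glue hcb⟩⟩
  have hcardX : X.card = fnum (m+1) := by
    have hu := Finset.card_union_add_card_inter (XB.image (emb b)) (XC.image (emb c))
    rw [hBC, Finset.card_singleton, Finset.card_image_of_injective _ (einj b),
      Finset.card_image_of_injective _ (einj c), cardB, cardC] at hu
    have hX2 : X.card = (XA.image (emb a)).card +
        (XB.image (emb b) ∪ XC.image (emb c)).card := by
      rw [hX, Finset.union_assoc]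
      exact Finset.card_union_of_disjoint hdisj
    rw [Finset.card_image_of_injective _ (einj a), cardA] at hX2
    have hodd : Odd (3^m) := Odd.pow (by decide)
    obtain ⟨k, hk⟩ := hodd
    have e1 : fnum m = k + 1 := by unfold fnum; omega
    have e2 : fnum (m+1) = 3*k + 2 := by
      unfold fnum; rw [pow_succ, hk]; omega
    omega
  -- corner membership
  have cornX : ∀ d, corner (m+1) d ∈ X ↔ d = a := by
    intro d
    rcases fin3_cover a b c d hab hca hcb with hd | hd | hd <;> rw [hd]
    · rw [← emb_corner_self, hXa, cornA]
    · rw [← emb_corner_self, hXb, cornB]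
      exact ⟨fun h => absurd h.symm hcb, fun h => absurd h.symm hab⟩
    · rw [← emb_corner_self, hXc, cornC]
      exact ⟨fun h => absurd h hcb, fun h => absurd h hca⟩
  -- rank transfer lemmas
  have TA : ∀ x y, x ∉ XA → y ∉ XA → (SG m).Adj x y →
      (ρ (emb a y) < ρ (emb a x) ↔ ρA y < ρA x) := by
    intro x y hx hy hadj
    by_cases hxb : x = corner m b
    · by_cases hyb : y = corner m b
      · exact absurd (hxb.trans hyb.symm) hadj.ne
      · subst hxb
        rw [evAB, evA y hyb]
        have h1 := hltM (corner m a)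
        have h2 := rootA y hadj hy
        constructor
        · intro h; omega
        · intro h; omega
    · by_cases hyb : y = corner m b
      · subst hyb
        rw [evAB, evA x hxb]
        have h1 := hltM (corner m a)
        have h2 := rootA x hadj.symm hx
        constructor
        · intro h; omega
        · intro h; omega
      · rw [evA x hxb, evA y hyb]
        omega
  have TC : ∀ x y, x ∉ XC → y ∉ XC → (SG m).Adj x y →
      (ρ (emb c y) < ρ (emb c x) ↔ ρC y < ρC x) := by
    intro x y hx hy hadj
    have hxb : x ≠ corner m b := fun h => hx (h ▸ (cornC b).2 rfl)
    have hyb : y ≠ corner m b := fun h => hy (h ▸ (cornC b).2 rfl)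
    by_cases hxa : x = corner m a
    · by_cases hya : y = corner m a
      · exact absurd (hxa.trans hya.symm) hadj.ne
      · subst hxa
        rw [evCA, evC y hyb hya]
        have h1 := hltN (corner m c)
        have h2 := rootC y hadj hy
        constructor
        · intro h; omega
        · intro h; omega
    · by_cases hya : y = corner m a
      · subst hya
        rw [evCA, evC x hxb hxa]
        have h1 := hltN (corner m c)
        have h2 := rootC x hadj.symm hx
        constructor
        · intro h; omega
        · intro h; omega
      · rw [evC x hxb hxa, evC y hyb hya]
        omega
  -- the "ne" condition
  have neX : ∀ x' y', (SG (m+1)).Adj x' y' → x' ∉ X → y' ∉ X → ρ x' ≠ ρ y' := by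
    intro x' y' hadj hx hy
    obtain ⟨i, x, y, rfl, rfl, hadjm⟩ := adj_decompose hadj
    rcases fin3_cover a b c i hab hca hcb with hi | hi | hi <;>
      rw [hi] at hx hy ⊢
    · rw [hXa] at hx hy
      by_cases hxb : x = corner m b
      · by_cases hyb : y = corner m b
        · exact absurd (hxb.trans hyb.symm) hadjm.ne
        · subst hxb
          rw [evAB, evA y hyb]
          have := hltM (corner m a); omega
      · by_cases hyb : y = corner m b
        · subst hyb
          rw [evAB, evA x hxb]
          have := hltM (corner m a); omega
        · rw [evA x hxb, evA y hyb]
          have := neA x y hadjm hx hy; omega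
    · rw [hXb] at hx hy
      rw [evB, evB]
      exact neB x y hadjm hx hy
    · rw [hXc] at hx hy
      have hxb : x ≠ corner m b := fun h => hx (h ▸ (cornC b).2 rfl)
      have hyb : y ≠ corner m b := fun h => hy (h ▸ (cornC b).2 rfl)
      by_cases hxa : x = corner m a
      · by_cases hya : y = corner m a
        · exact absurd (hxa.trans hya.symm) hadjm.ne
        · subst hxa
          rw [evCA, evC y hyb hya]
          have := hltN (corner m c); omega
      · by_cases hya : y = corner m a
        · subst hya
          rw [evCA, evC x hxb hxa]
          have := hltN (corner m c); omega
        · rw [evC x hxb hxa, evC y hyb hya]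
          have := neC x y hadjm hx hy; omega
  -- the uniqueness condition
  have uniqX : ∀ x' y' z', (SG (m+1)).Adj x' y' → (SG (m+1)).Adj x' z' →
      x' ∉ X → y' ∉ X → z' ∉ X → ρ y' < ρ x' → ρ z' < ρ x' → y' = z' := by
    intro x' y' z' hxy hxz hx hy hz hry hrz
    obtain ⟨i, x1, y1, hx1, rfl, hadj1⟩ := adj_decompose hxy
    obtain ⟨j, x2, z2, hx2, rfl, hadj2⟩ := adj_decompose hxz
    subst hx1
    -- helper facts
    rcases fin3_cover a b c i hab hca hcb with hi | hi | hi <;>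
      rcases fin3_cover a b c j hab hca hcb with hj | hj | hj <;>
      rw [hi] at hx hy hx2 hry hrz ⊢ <;> rw [hj] at hz hx2 hrz ⊢
    -- (a, a)
    · rw [← emb_inj hx2] at hadj2
      rw [hXa] at hx hy hz
      exact congrArg (emb a) (uniqA x1 y1 z2 hadj1 hadj2 hx hy hz
        ((TA x1 y1 hx hy hadj1).1 hry) ((TA x1 z2 hx hz hadj2).1 hrz))
    -- (a, b) : x' is the glue g_ab, edge 1 from copy a: impossible (rank too high)
    · obtain ⟨hc1, hc2⟩ := emb_cross hab hx2
      subst hc1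
      rw [hXa] at hx hy
      have hy1b : y1 ≠ corner m b := fun h => hadj1.ne (by rw [h])
      rw [evAB, evA y1 hy1b] at hry
      have := hltM (corner m a)
      omega
    -- (a, c) : x' is the glue g_ac, edge 2 from copy c: impossible
    · obtain ⟨hc1, hc2⟩ := emb_cross (Ne.symm hca) hx2
      subst hc1
      subst hc2
      rw [hXc] at hz
      have hz2b : z2 ≠ corner m b := fun h => hz (h ▸ (cornC b).2 rfl)
      have hz2a : z2 ≠ corner m a := fun h => hadj2.ne (by rw [h])
      rw [hx2, evCA, evC z2 hz2b hz2a] at hrz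
      have := hltN (corner m c)
      omega
    -- (b, a) : glue g_ab, edge 2 from copy a: impossible
    · obtain ⟨hc1, hc2⟩ := emb_cross (Ne.symm hab) hx2
      subst hc1
      subst hc2
      rw [hXa] at hz
      have hz2b : z2 ≠ corner m b := fun h => hadj2.ne (by rw [h])
      rw [hx2, evAB, evA z2 hz2b] at hrz
      have := hltM (corner m a)
      omega
    -- (b, b)
    · rw [← emb_inj hx2] at hadj2
      rw [hXb] at hx hy hz
      rw [evB, evB] at hry
      rw [evB, evB] at hrz
      exact congrArg (emb b) (uniqB x1 y1 z2 hadj1 hadj2 hx hy hz hry hrz)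
    -- (b, c) : x' = emb b (corner m c) is dead: contradiction
    · obtain ⟨hc1, hc2⟩ := emb_cross (Ne.symm hcb) hx2
      subst hc1
      exact absurd ((hXb (corner m c)).2 ((cornB c).2 rfl)) hx
    -- (c, a) : glue g_ac, edge 1 from copy c: impossible
    · obtain ⟨hc1, hc2⟩ := emb_cross hca hx2
      subst hc1
      rw [hXc] at hy
      have hy1b : y1 ≠ corner m b := fun h => hy (h ▸ (cornC b).2 rfl)
      have hy1a : y1 ≠ corner m a := fun h => hadj1.ne (by rw [h])
      rw [evCA, evC y1 hy1b hy1a] at hry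
      have := hltN (corner m c)
      omega
    -- (c, b) : x' dead
    · obtain ⟨hc1, hc2⟩ := emb_cross hcb hx2
      subst hc1
      exact absurd ((hXc (corner m b)).2 ((cornC b).2 rfl)) hx
    -- (c, c)
    · rw [← emb_inj hx2] at hadj2
      rw [hXc] at hx hy hz
      exact congrArg (emb c) (uniqC x1 y1 z2 hadj1 hadj2 hx hy hz
        ((TC x1 y1 hx hy hadj1).1 hry) ((TC x1 z2 hx hz hadj2).1 hrz))
  -- the root condition
  have rootX : ∀ y', (SG (m+1)).Adj (corner (m+1) b) y' → y' ∉ X →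
      ρ (corner (m+1) b) < ρ y' := by
    intro y' hadj hy
    obtain ⟨i, x1, y1, hx1, rfl, hadj1⟩ := adj_decompose hadj
    obtain ⟨rfl, rfl⟩ := emb_eq_corner hx1.symm
    rw [hXb] at hy
    rw [← emb_corner_self, evB, evB]
    exact rootB y1 hadj1 hy
  exact ⟨X, ρ, hcardX, cornX, neX, uniqX, rootX⟩

end Step
section Final

theorem invar_all (m : ℕ) : ∀ a b : Fin 3, a ≠ b → Invar m a b := by
  induction m with
  | zero => exact fun a b hab => inv_base hab
  | succ m ih => exact fun a b hab => inv_step ih hab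

theorem tau_eq (m : ℕ) : feedbackNumber (SG m) = fnum m := by
  classical
  obtain ⟨X, ρ, hcard, hcorn, hne, huniq, hroot⟩ := invar_all m 0 1 (by decide)
  have hfvs : IsFeedbackVertexSet (SG m) ↑X := by
    unfold IsFeedbackVertexSet
    apply rank_isAcyclic (ρ := fun v => ρ v.val)
    · intro u v huv
      have hu : u.val ∉ X := fun h => u.prop (Finset.mem_coe.2 h)
      have hv : v.val ∉ X := fun h => v.prop (Finset.mem_coe.2 h)
      exact hne u.val v.val (SimpleGraph.comap_adj.1 huv) hu hv
    · intro u v w huv huw h1 h2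
      have hu : u.val ∉ X := fun h => u.prop (Finset.mem_coe.2 h)
      have hv : v.val ∉ X := fun h => v.prop (Finset.mem_coe.2 h)
      have hw : w.val ∉ X := fun h => w.prop (Finset.mem_coe.2 h)
      exact Subtype.ext (huniq u.val v.val w.val (SimpleGraph.comap_adj.1 huv)
        (SimpleGraph.comap_adj.1 huw) hu hv hw h1 h2)
  have hmem : fnum m ∈ {k | ∃ X : Finset (Vtx m), X.card = k ∧
      IsFeedbackVertexSet (SG m) ↑X} := ⟨X, hcard, hfvs⟩
  apply le_antisymm
  · exact Nat.sInf_le hmem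
  · obtain ⟨Y, hY1, hY2⟩ := Nat.sInf_mem (⟨_, hmem⟩ : Set.Nonempty _)
    calc fnum m ≤ Y.card := fvs_lower_bound Y hY2
      _ = feedbackNumber (SG m) := hY1
end Final

theorem stmt13 (n : Nat) (hn : 1 ≤ n) :
    feedbackNumber (sierpinskiTriangle 3 n) =
      3 * feedbackNumber (sierpinskiTriangle 3 (n - 1)) - 1 := by
  obtain ⟨m, rfl⟩ : ∃ m, n = m + 1 := ⟨n - 1, by omega⟩
  have h1 : feedbackNumber (sierpinskiTriangle 3 (m+1)) = fnum (m+1) := tau_eq (m+1)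
  have h2 : feedbackNumber (sierpinskiTriangle 3 (m+1-1)) = fnum m := tau_eq m
  rw [h1, h2]
  have hodd : Odd (3^m) := Odd.pow (by decide)
  obtain ⟨k, hk⟩ := hodd
  have e1 : fnum m = k + 1 := by unfold fnum; omega
  have e2 : fnum (m+1) = 3*k + 2 := by unfold fnum; rw [pow_succ, hk]; omega
  omega
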